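/- Let φ_ε, φ : X × X → ℝ and suppose x̂ maximizes φ_ε(·, x̂) over X, x̄ maximizes φ(·, x̄) over X. If there exist constants γ > 0 and ν ∈ (0,1) such that φ_ε(x, x̂) ≤ φ_ε(x̂, x̂) − γ‖x − x̂‖^ν for all x ∈ X (growth condition), and sup_{x∈X} |φ_ε(x, x̂) − φ(x, x̂)| ≤ δ and |φ(x̂, x̂) − φ(x̄, x̂)| ≤ κ‖x̂ − x̄‖, then γ‖x̂ − x̄‖^ν ≤ 2δ + κ‖x̂ − x̄‖. Consequently, if moreover (γ/2)‖x̂ − x̄‖^ν ≥ κ‖x̂ − x̄‖, then ‖x̂ − x̄‖ ≤ (4δ/γ)^{1/ν}. -/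
import Mathlib


/-- abstract perturbation estimate under a growth condition:
`γ‖x̂−x̄‖^ν ≤ 2δ + κ‖x̂−x̄‖`, and if moreover `κ‖x̂−x̄‖ ≤ (γ/2)‖x̂−x̄‖^ν` then
`‖x̂−x̄‖ ≤ (4δ/γ)^{1/ν}`. -/
theorem growth_perturbation_estimate {E : Type*} [NormedAddCommGroup E]
    (X : Set E) (φε φ : E → E → ℝ) (xh xb : E) (hxh : xh ∈ X) (hxb : xb ∈ X)
    (γ ν δ κ : ℝ) (hγ : 0 < γ) (hν : ν ∈ Set.Ioo (0:ℝ) 1) (hδ : 0 ≤ δ) (hκ : 0 ≤ κ)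
    (hmaxε : ∀ x ∈ X, φε x xh ≤ φε xh xh)
    (hmax : ∀ x ∈ X, φ x xb ≤ φ xb xb)
    (hgrowth : ∀ x ∈ X, φε x xh ≤ φε xh xh - γ * ‖x - xh‖ ^ ν)
    (hsup : ∀ x ∈ X, |φε x xh - φ x xh| ≤ δ)
    (hlip : |φ xh xh - φ xb xh| ≤ κ * ‖xh - xb‖) :
    γ * ‖xh - xb‖ ^ ν ≤ 2 * δ + κ * ‖xh - xb‖ ∧
    (κ * ‖xh - xb‖ ≤ γ / 2 * ‖xh - xb‖ ^ ν →
      ‖xh - xb‖ ≤ (4 * δ / γ) ^ (1 / ν)) := by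
  have hrev : ‖xb - xh‖ = ‖xh - xb‖ := norm_sub_rev _ _
  have h1 : φε xb xh ≤ φε xh xh - γ * ‖xh - xb‖ ^ ν := by
    have := hgrowth xb hxb; rwa [hrev] at this
  have h2 : |φε xb xh - φ xb xh| ≤ δ := hsup xb hxb
  have h3 : |φε xh xh - φ xh xh| ≤ δ := hsup xh hxh
  have habs2 := abs_le.mp h2
  have habs3 := abs_le.mp h3
  have hlip' := abs_le.mp hlip
  have main : γ * ‖xh - xb‖ ^ ν ≤ 2 * δ + κ * ‖xh - xb‖ := by linarith
  refine ⟨main, fun hsmall => ?_⟩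
  have hν0 : 0 < ν := hν.1
  have hpow_nonneg : (0:ℝ) ≤ ‖xh - xb‖ ^ ν := Real.rpow_nonneg (norm_nonneg _) ν
  have hkey : ‖xh - xb‖ ^ ν ≤ 4 * δ / γ := by
    rw [le_div_iff₀ hγ]; nlinarith
  calc ‖xh - xb‖ = (‖xh - xb‖ ^ ν) ^ (1 / ν) := by
        rw [← Real.rpow_mul (norm_nonneg _), mul_one_div, div_self hν0.ne',
          Real.rpow_one]
      _ ≤ (4 * δ / γ) ^ (1 / ν) :=
        Real.rpow_le_rpow hpow_nonneg hkey (by positivity)
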